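/- Under the hypotheses of the previous statement, if additionally $u(r)>0$ for all $r>0$ and $u'(r)\to -\infty$-like behavior near $0$ (i.e.\ $u'<0$ near $0$), then $u'(r)<0$ for all $r>0$; i.e.\ $u'$ never vanishes. -/

import Mathlib

open Real Filter Set Topology MeasureTheory intervalIntegral

theorem stmt11 (N : ℕ) (hN : 2 < N) (f : ℝ → ℝ)
    (hfc : ContinuousOn f (Set.Ici 0)) (hf0 : f 0 = 0)
    (hfpos : ∀ v > (0:ℝ), 0 < f v)
    (hQ : ∀ v ≥ (0:ℝ),
      (2 * (N : ℝ) / ((N : ℝ) - 2)) * (∫ s in (0:ℝ)..v, f s) ≤ v * f v)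
    (u : ℝ → ℝ) (hu2 : ContDiffOn ℝ 2 u (Set.Ioi 0))
    (hode : ∀ r > (0:ℝ),
      deriv (deriv u) r + ((N : ℝ) - 1) / r * deriv u r + f (u r) = 0)
    (hupos : ∀ r > (0:ℝ), 0 < u r)
    (hneg : ∃ ε > (0:ℝ), ∀ r ∈ Set.Ioo 0 ε, deriv u r < 0)
    (hP : Tendsto (fun r : ℝ =>
        (1 / 2) * r ^ N * (deriv u r) ^ 2 + r ^ N * (∫ s in (0:ℝ)..(u r), f s)
          + ((N : ℝ) - 2) / 2 * r ^ (N - 1) * u r * deriv u r)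
      (𝓝[>] 0) (𝓝 0)) :
    ∀ r > (0:ℝ), deriv u r < 0 := by
  obtain ⟨n, rfl⟩ : ∃ n, N = n + 3 := ⟨N - 3, by omega⟩
  have hsub : n + 3 - 1 = n + 2 := rfl
  rw [hsub] at hP
  set P : ℝ → ℝ := fun r =>
    (1 / 2) * r ^ (n + 3) * (deriv u r) ^ 2 + r ^ (n + 3) * (∫ s in (0:ℝ)..(u r), f s)
      + (((n : ℝ) + 3) - 2) / 2 * r ^ (n + 2) * u r * deriv u r with hPdef
  have hPtend : Tendsto P (𝓝[>] 0) (𝓝 0) := by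
    apply hP.congr'
    filter_upwards with r
    push_cast [hPdef]
    ring
  -- derivatives of u
  have hderiv1 : ContDiffOn ℝ 1 (deriv u) (Set.Ioi 0) :=
    hu2.deriv_of_isOpen isOpen_Ioi (by norm_num)
  have hu' : ∀ r > (0:ℝ), HasDerivAt u (deriv u r) r := fun r hr =>
    ((hu2.contDiffAt (isOpen_Ioi.mem_nhds hr)).differentiableAt
      (by norm_num)).hasDerivAt
  have hu'' : ∀ r > (0:ℝ), HasDerivAt (deriv u) (deriv (deriv u) r) r := fun r hr =>
    ((hderiv1.contDiffAt (isOpen_Ioi.mem_nhds hr)).differentiableAt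
      (by norm_num)).hasDerivAt
  -- FTC
  have hint : ∀ v > (0:ℝ), IntervalIntegrable f MeasureTheory.volume 0 v := by
    intro v hv
    apply ContinuousOn.intervalIntegrable
    apply hfc.mono
    rw [Set.uIcc_of_le hv.le]
    exact fun x hx => hx.1
  have hFv : ∀ v > (0:ℝ), HasDerivAt (fun v => ∫ s in (0:ℝ)..v, f s) (f v) v := by
    intro v hv
    have hcont : ContinuousAt f v := hfc.continuousAt (Ici_mem_nhds hv)
    exact intervalIntegral.integral_hasDerivAt_right (hint v hv)
      (ContinuousOn.stronglyMeasurableAtFilter isOpen_Ioi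
        (hfc.mono (fun x (hx : x ∈ Set.Ioi 0) => hx.le)) v hv) hcont
  have hF : ∀ r > (0:ℝ), HasDerivAt (fun r => ∫ s in (0:ℝ)..(u r), f s)
      (f (u r) * deriv u r) r := fun r hr =>
    (hFv (u r) (hupos r hr)).comp r (hu' r hr)
  -- derivative of P
  have key : ∀ r > (0:ℝ), HasDerivAt P
      ((((n:ℝ)+3) * r ^ (n+2)) * (∫ s in (0:ℝ)..(u r), f s)
        - (((n:ℝ)+1)/2) * r ^ (n+2) * (u r * f (u r))) r := by
    intro r hr
    have hr0 : r ≠ 0 := ne_of_gt hr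
    have hA : HasDerivAt (fun r => (1/2) * r ^ (n+3) * (deriv u r) ^ 2)
        ((1/2) * (((n:ℝ)+3) * r ^ (n+2)) * (deriv u r)^2
          + (1/2) * r ^ (n+3) * (2 * deriv u r ^ 1 * deriv (deriv u) r)) r := by
      have h1 : HasDerivAt (fun r : ℝ => (1/2) * r ^ (n+3)) ((1/2) * (((n:ℝ)+3) * r ^ (n+2))) r := by
        have := (hasDerivAt_pow (n+3) r).const_mul (1/2 : ℝ)
        simpa using this
      have h2 := (hu'' r hr).pow 2
      simpa [Pi.mul_def, Pi.pow_def, mul_comm, mul_assoc, mul_left_comm] using h1.mul h2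
    have hB : HasDerivAt (fun r => r ^ (n+3) * (∫ s in (0:ℝ)..(u r), f s))
        ((((n:ℝ)+3) * r ^ (n+2)) * (∫ s in (0:ℝ)..(u r), f s)
          + r ^ (n+3) * (f (u r) * deriv u r)) r := by
      have h1 : HasDerivAt (fun r : ℝ => r ^ (n+3)) (((n:ℝ)+3) * r ^ (n+2)) r := by
        simpa using hasDerivAt_pow (n+3) r
      exact h1.mul (hF r hr)
    have hC : HasDerivAt (fun r => (((n:ℝ)+3) - 2) / 2 * r ^ (n+2) * u r * deriv u r)
        ((((((n:ℝ)+3) - 2)/2 * (((n:ℝ)+2) * r ^ (n+1)) * u r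
          + (((n:ℝ)+3) - 2)/2 * r ^ (n+2) * deriv u r) * deriv u r)
          + (((n:ℝ)+3) - 2)/2 * r ^ (n+2) * u r * deriv (deriv u) r) r := by
      have h1 : HasDerivAt (fun r : ℝ => (((n:ℝ)+3) - 2)/2 * r ^ (n+2))
          ((((n:ℝ)+3) - 2)/2 * (((n:ℝ)+2) * r ^ (n+1))) r := by
        have := (hasDerivAt_pow (n+2) r).const_mul ((((n:ℝ)+3) - 2)/2)
        simpa using this
      exact (h1.mul (hu' r hr)).mul (hu'' r hr)
    have hcomb := (hA.add hB).add hC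
    have hodeeq : deriv (deriv u) r
        = -((((n:ℝ)+3) - 1)/r * deriv u r + f (u r)) := by
      have := hode r hr
      push_cast at this ⊢
      linarith
    refine HasDerivAt.congr_deriv (f := P) hcomb ?_
    rw [hodeeq]
    field_simp
    ring
  have hPcont : ContinuousOn P (Set.Ioi 0) := fun r hr =>
    ((key r hr).differentiableAt.continuousAt).continuousWithinAt
  have hanti : AntitoneOn P (Set.Ioi 0) := by
    apply antitoneOn_of_deriv_nonpos (convex_Ioi 0) hPcont
    · intro x hx
      rw [isOpen_Ioi.interior_eq] at hx
      exact (key x hx).differentiableAt.differentiableWithinAt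
    · intro x hx
      rw [isOpen_Ioi.interior_eq] at hx
      rw [(key x hx).deriv]
      have hux := (hupos x hx).le
      have hq := hQ (u x) hux
      push_cast at hq
      have hd : (0:ℝ) < (n:ℝ) + 1 := by positivity
      have hq' : (((n:ℝ)+3)) * (∫ s in (0:ℝ)..(u x), f s)
          ≤ (((n:ℝ)+1)/2) * (u x * f (u x)) := by
        have h2 : ((n:ℝ) + 3) - 2 = (n:ℝ) + 1 := by ring
        rw [h2] at hq
        rw [div_mul_eq_mul_div, div_le_iff₀ hd] at hq
        nlinarith
      have hxp : (0:ℝ) ≤ x ^ (n+2) := (pow_pos hx _).le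
      nlinarith [mul_le_mul_of_nonneg_left hq' hxp]
  have hPle : ∀ r > (0:ℝ), P r ≤ 0 := by
    intro r hr
    refine ge_of_tendsto hPtend ?_
    filter_upwards [Ioo_mem_nhdsGT_of_mem (Set.left_mem_Ico.mpr hr)] with s hs
    exact hanti hs.1 hr hs.2.le
  have hzero : ∀ r > (0:ℝ), deriv u r ≠ 0 := by
    intro r hr h0
    have hFpos : 0 < ∫ s in (0:ℝ)..(u r), f s :=
      intervalIntegral.intervalIntegral_pos_of_pos_on (hint (u r) (hupos r hr))
        (fun x hx => hfpos x hx.1) (hupos r hr)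
    have hPr : P r = r ^ (n+3) * (∫ s in (0:ℝ)..(u r), f s) := by
      simp [hPdef, h0]
    have : 0 < P r := by
      rw [hPr]
      exact mul_pos (pow_pos hr _) hFpos
    linarith [hPle r hr]
  -- conclude by IVT
  intro r hr
  by_contra hge
  push_neg at hge
  obtain ⟨ε, hε, hnegε⟩ := hneg
  set r2 : ℝ := min ε r / 2 with hr2def
  have hr2pos : 0 < r2 := by positivity
  have hr2ε : r2 < ε := by
    have : min ε r ≤ ε := min_le_left _ _
    simp only [hr2def]; linarith
  have hr2r : r2 ≤ r := by
    have : min ε r ≤ r := min_le_right _ _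
    simp only [hr2def]; linarith
  have hneg2 : deriv u r2 < 0 := hnegε r2 ⟨hr2pos, hr2ε⟩
  have hcont : ContinuousOn (deriv u) (Set.Icc r2 r) :=
    (hderiv1.continuousOn).mono (fun x hx => lt_of_lt_of_le hr2pos hx.1)
  have h0mem : (0:ℝ) ∈ Set.Icc (deriv u r2) (deriv u r) := ⟨hneg2.le, hge⟩
  obtain ⟨c, hcmem, hc0⟩ := intermediate_value_Icc hr2r hcont h0mem
  exact hzero c (lt_of_lt_of_le hr2pos hcmem.1) hc0
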